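/- Let 0 < ε < (3 − 2√2)/4 and n ≥ 3, and assume (3 − 2√2 − 4ε)·2^{n−3} ≥ 1. Define 𝓛_n = {f : ∃ ω, d(f, ℓ_ω) ≤ 2^{n−3}} and 𝓛_{n,ε} = {f : ∃ ω, d(f, ℓ_ω) ≤ (1 + (3 − 2√2 − 4ε))·2^{n−3}} (the latter distance bound being an inequality of real numbers). Then |𝓛_{n,ε}| > |𝓛_n|. -/

import Mathlib

/-- Walsh transform of an n-variable Boolean function at point ω. -/
def walsh {n : ℕ} (f : (Fin n → ZMod 2) → ZMod 2) (ω : Fin n → ZMod 2) : ℤ :=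
  ∑ x : Fin n → ZMod 2, (-1 : ℤ) ^ (f x + ∑ i, ω i * x i).val

/-- The linear Boolean function x ↦ ω·x. -/
def linfun {n : ℕ} (ω : Fin n → ZMod 2) : (Fin n → ZMod 2) → ZMod 2 :=
  fun x => ∑ i, ω i * x i

/-- Hamming distance between two n-variable Boolean functions. -/
def hamming {n : ℕ} (f g : (Fin n → ZMod 2) → ZMod 2) : ℕ :=
  (Finset.univ.filter fun x => f x ≠ g x).card

lemma zmod2_cases (a : ZMod 2) : a = 0 ∨ a = 1 := by revert a; decide

lemma linfun_add_single {n : ℕ} (ω x : Fin n → ZMod 2) (i : Fin n) :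
    linfun ω (x + Pi.single i 1) = linfun ω x + ω i := by
  unfold linfun
  simp [mul_add, Finset.sum_add_distrib, Pi.single_apply, mul_ite, Finset.sum_ite_eq']

lemma single_self_add {n : ℕ} (i : Fin n) (x : Fin n → ZMod 2) :
    x + Pi.single i 1 + Pi.single i 1 = x := by
  have h2 : ∀ a : ZMod 2, a + 1 + 1 = a := by decide
  ext j
  simp only [Pi.add_apply, Pi.single_apply]
  split
  · exact h2 _
  · simp

lemma card_one {n : ℕ} (ω : Fin n → ZMod 2) (hω : ω ≠ 0) :
    2 * (Finset.univ.filter fun x => linfun ω x = 1).card = 2 ^ n := by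
  obtain ⟨i, hi⟩ : ∃ i, ω i ≠ 0 := by
    by_contra h; push_neg at h; exact hω (funext fun i => h i)
  have hi1 : ω i = 1 := (zmod2_cases (ω i)).resolve_left hi
  have hbij : (Finset.univ.filter fun x => linfun ω x = 0).card
      = (Finset.univ.filter fun x => linfun ω x = 1).card := by
    apply Finset.card_bij' (fun x _ => x + Pi.single i 1) (fun x _ => x + Pi.single i 1)
    · intro a _; exact single_self_add i a
    · intro a _; exact single_self_add i a
    · intro a ha
      simp only [Finset.mem_filter, Finset.mem_univ, true_and] at *
      rw [linfun_add_single, ha, hi1, zero_add]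
    · intro a ha
      simp only [Finset.mem_filter, Finset.mem_univ, true_and] at *
      rw [linfun_add_single, ha, hi1]
      decide
  have hsplit := Finset.card_filter_add_card_filter_not
    (s := (Finset.univ : Finset (Fin n → ZMod 2))) (p := fun x => linfun ω x = 1)
  have hneg : (Finset.univ.filter fun x => ¬ linfun ω x = 1)
      = (Finset.univ.filter fun x => linfun ω x = 0) := by
    apply Finset.filter_congr
    intro x _
    rcases zmod2_cases (linfun ω x) with h | h <;> simp [h]
  rw [hneg, hbij] at hsplit
  have : (Finset.univ : Finset (Fin n → ZMod 2)).card = 2 ^ n := by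
    simp [Finset.card_univ]
  omega

theorem stmt_16 {n : ℕ} (hn : 3 ≤ n) (ε : ℝ) (hε : 0 < ε)
    (hε' : ε < (3 - 2 * Real.sqrt 2) / 4)
    (hgap : (3 - 2 * Real.sqrt 2 - 4 * ε) * 2 ^ (n - 3) ≥ 1) :
    {f : (Fin n → ZMod 2) → ZMod 2 | ∃ ω, hamming f (linfun ω) ≤ 2 ^ (n - 3)}.ncard <
    {f : (Fin n → ZMod 2) → ZMod 2 | ∃ ω,
      (hamming f (linfun ω) : ℝ) ≤ (1 + (3 - 2 * Real.sqrt 2 - 4 * ε)) * 2 ^ (n - 3)}.ncard := by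
  obtain ⟨m, rfl⟩ : ∃ m, n = m + 3 := ⟨n - 3, by omega⟩
  simp only [Nat.add_sub_cancel] at hgap ⊢
  set γ : ℝ := 3 - 2 * Real.sqrt 2 - 4 * ε with hγ
  -- pick a set S of size 2^m + 1
  have hmle : 2 ^ m + 1 ≤ (Finset.univ : Finset (Fin (m + 3) → ZMod 2)).card := by
    have : (Finset.univ : Finset (Fin (m + 3) → ZMod 2)).card = 2 ^ (m + 3) := by
      simp [Finset.card_univ]
    have h8 : 2 ^ (m + 3) = 8 * 2 ^ m := by ring
    have h1 : 1 ≤ 2 ^ m := Nat.one_le_two_pow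
    omega
  obtain ⟨S, -, hS⟩ := Finset.exists_subset_card_eq hmle
  set f : (Fin (m + 3) → ZMod 2) → ZMod 2 := fun x => if x ∈ S then 1 else 0 with hf
  have hl0 : linfun (0 : Fin (m + 3) → ZMod 2) = fun _ => 0 := by
    funext x; simp [linfun]
  have h0 : hamming f (linfun 0) = 2 ^ m + 1 := by
    unfold hamming
    rw [← hS, hl0]
    congr 1
    ext x
    by_cases hx : x ∈ S <;> simp [hf, hx]
  -- f is far from every linear function
  have hfar : ∀ ω : Fin (m + 3) → ZMod 2, 2 ^ m < hamming f (linfun ω) := by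
    intro ω
    by_cases hω : ω = 0
    · rw [hω, h0]; omega
    · have hone := card_one ω hω
      have hsub : (Finset.univ.filter fun x => linfun ω x = 1) \ S ⊆
          Finset.univ.filter fun x => f x ≠ linfun ω x := by
        intro x hx
        simp only [Finset.mem_sdiff, Finset.mem_filter, Finset.mem_univ, true_and] at hx ⊢
        rw [hx.1]
        simp [hf, hx.2]
      have hcard := Finset.card_le_card hsub
      have hsd : (Finset.univ.filter fun x => linfun ω x = 1).card ≤
          ((Finset.univ.filter fun x => linfun ω x = 1) \ S).card + S.card :=
        Finset.card_le_card_sdiff_add_card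
      unfold hamming
      have h8 : (2:ℕ) ^ (m + 3) = 8 * 2 ^ m := by ring
      have h1 : 1 ≤ 2 ^ m := Nat.one_le_two_pow
      omega
  have hγpos : (0:ℝ) < γ * 2 ^ m := lt_of_lt_of_le one_pos hgap
  -- subset relation
  have hAB : {f : (Fin (m+3) → ZMod 2) → ZMod 2 | ∃ ω, hamming f (linfun ω) ≤ 2 ^ m} ⊆
      {f : (Fin (m+3) → ZMod 2) → ZMod 2 | ∃ ω,
        (hamming f (linfun ω) : ℝ) ≤ (1 + γ) * 2 ^ m} := by
    rintro g ⟨ω, hg⟩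
    refine ⟨ω, ?_⟩
    have h1 : (hamming g (linfun ω) : ℝ) ≤ (2:ℝ) ^ m := by exact_mod_cast hg
    nlinarith [hγpos]
  have hfB : f ∈ {f : (Fin (m+3) → ZMod 2) → ZMod 2 | ∃ ω,
      (hamming f (linfun ω) : ℝ) ≤ (1 + γ) * 2 ^ m} := by
    refine ⟨0, ?_⟩
    rw [h0]
    push_cast
    nlinarith [hgap]
  have hfA : f ∉ {f : (Fin (m+3) → ZMod 2) → ZMod 2 | ∃ ω, hamming f (linfun ω) ≤ 2 ^ m} := by
    rintro ⟨ω, hω⟩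
    exact absurd hω (not_le.mpr (hfar ω))
  exact Set.ncard_lt_ncard
    ((Set.ssubset_iff_of_subset hAB).mpr ⟨f, hfB, hfA⟩) (Set.toFinite _)
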